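/- Let H be a finite-dimensional real inner product space with norm ‖·‖, a a symmetric positive semidefinite bilinear form on H with induced seminorm ‖v‖_a = √(a(v,v)), α₀ > 0, and f¹,…,f^N ∈ H. Suppose u⁰,…,u^N ∈ H satisfy, for all k = 0,…,N-1 and all v ∈ H: Σ_{j=0}^{k} b_{k-j} ⟨u^{j+1} - u^j, v⟩ + α₀ a(u^{k+1}, v) = α₀ ⟨f^{k+1}, v⟩, where b_j = (j+1)^{1-α} - j^{1-α} with α ∈ (0,1). Then ‖u^N‖_a² ≤ ‖u⁰‖_a² + α₀ Σ_{k=0}^{N-1} ‖f^{k+1}‖². -/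

import Mathlib

open Finset Real

-- convexity of x ↦ (x+1)^γ - x^γ on Ici 0
lemma gconv {γ : ℝ} (h0 : 0 < γ) (h1 : γ < 1) :
    ConvexOn ℝ (Set.Ici 0) (fun x : ℝ => (x + 1) ^ γ - x ^ γ) := by
  have hcont : Continuous (fun x : ℝ => x ^ γ) := by
    rw [continuous_iff_continuousAt]
    exact fun x => Real.continuousAt_rpow_const x γ (Or.inr h0.le)
  have hIoi : interior (Set.Ici (0:ℝ)) = Set.Ioi 0 := interior_Ici
  apply convexOn_of_hasDerivWithinAt2_nonneg (convex_Ici 0)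
    (f' := fun x => γ * (x + 1) ^ (γ - 1) - γ * x ^ (γ - 1))
    (f'' := fun x => γ * (γ - 1) * (x + 1) ^ (γ - 2) - γ * (γ - 1) * x ^ (γ - 2))
  · exact ((hcont.comp (continuous_id.add continuous_const)).sub hcont).continuousOn
  · intro x hx
    rw [hIoi] at hx
    have hx0 : (0:ℝ) < x := hx
    have h1' : HasDerivAt (fun x : ℝ => (x + 1) ^ γ) (γ * (x + 1) ^ (γ - 1)) x := by
      have := (Real.hasDerivAt_rpow_const (x := x + 1) (p := γ) (Or.inl (by positivity))).comp x
        ((hasDerivAt_id x).add_const 1)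
      simpa [Function.comp_def] using this
    have h2' : HasDerivAt (fun x : ℝ => x ^ γ) (γ * x ^ (γ - 1)) x :=
      Real.hasDerivAt_rpow_const (Or.inl hx0.ne')
    exact (h1'.sub h2').hasDerivWithinAt
  · intro x hx
    rw [hIoi] at hx
    have hx0 : (0:ℝ) < x := hx
    have h1' : HasDerivAt (fun x : ℝ => γ * (x + 1) ^ (γ - 1))
        (γ * ((γ - 1) * (x + 1) ^ (γ - 1 - 1))) x := by
      have := (Real.hasDerivAt_rpow_const (x := x + 1) (p := γ - 1) (Or.inl (by positivity))).comp x
        ((hasDerivAt_id x).add_const 1)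
      simpa using (this.const_mul γ)
    have h2' : HasDerivAt (fun x : ℝ => γ * x ^ (γ - 1))
        (γ * ((γ - 1) * x ^ (γ - 1 - 1))) x :=
      (Real.hasDerivAt_rpow_const (Or.inl hx0.ne')).const_mul γ
    refine HasDerivWithinAt.congr_deriv ((h1'.sub h2').hasDerivWithinAt) ?_
    ring_nf
  · intro x hx
    rw [hIoi] at hx
    have hx0 : (0:ℝ) < x := hx
    have hle : (x + 1) ^ (γ - 2) ≤ x ^ (γ - 2) :=
      Real.antitoneOn_rpow_Ioi_of_exponent_nonpos (by linarith)
        (Set.mem_Ioi.mpr hx0) (Set.mem_Ioi.mpr (by linarith)) (by linarith)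
    have hc : γ * (γ - 1) ≤ 0 := mul_nonpos_of_nonneg_of_nonpos h0.le (by linarith)
    nlinarith [hle, hc]

lemma tri (g : ℕ → ℕ → ℝ) (hg : ∀ j k, g j k = g k j) (N : ℕ) :
    2 * ∑ k ∈ range N, ∑ j ∈ range (k + 1), g j k
      = (∑ j ∈ range N, ∑ k ∈ range N, g j k) + ∑ k ∈ range N, g k k := by
  induction N with
  | zero => simp
  | succ n ih =>
    have h1 : ∑ k ∈ range n, g n k = ∑ k ∈ range n, g k n :=
      Finset.sum_congr rfl fun k _ => hg n k
    rw [Finset.sum_range_succ (fun k => ∑ j ∈ range (k + 1), g j k) n,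
      Finset.sum_range_succ (fun k => g k k) n,
      Finset.sum_range_succ (fun j => ∑ k ∈ range (n + 1), g j k) n,
      Finset.sum_congr rfl fun j (_ : j ∈ range n) => Finset.sum_range_succ (fun k => g j k) n,
      Finset.sum_add_distrib,
      Finset.sum_range_succ (fun k => g n k) n,
      Finset.sum_range_succ (fun j => g j n) n]

    linarith [h1, ih]

-- b properties
lemma bfacts {α : ℝ} (hα0 : 0 < α) (hα1 : α < 1) (b : ℕ → ℝ)
    (hb : ∀ j : ℕ, b j = ((j : ℝ) + 1) ^ (1 - α) - (j : ℝ) ^ (1 - α)) :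
    b 0 = 1 ∧ (∀ j, 0 ≤ b j) ∧ (∀ j, b (j + 1) ≤ b j)
      ∧ (∀ p, 0 ≤ b p - 2 * b (p + 1) + b (p + 2)) := by
  set γ := 1 - α with hγ
  have hγ0 : 0 < γ := by simp [hγ]; linarith
  have hγ1 : γ < 1 := by simp [hγ]; linarith
  refine ⟨?_, ?_, ?_, ?_⟩
  · rw [hb 0]
    norm_num [Real.zero_rpow (show γ ≠ 0 from hγ0.ne'), Real.one_rpow]
  · intro j
    rw [hb j]
    have := Real.rpow_le_rpow (Nat.cast_nonneg j) (by linarith : (j:ℝ) ≤ (j:ℝ) + 1) hγ0.le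
    linarith
  · intro j
    have hcc := (Real.strictConcaveOn_rpow hγ0 hγ1).concaveOn
    have key := hcc.2 (Set.mem_Ici.mpr (Nat.cast_nonneg j))
      (Set.mem_Ici.mpr (by positivity : (0:ℝ) ≤ (j:ℝ) + 2))
      (by norm_num : (0:ℝ) ≤ 1/2) (by norm_num : (0:ℝ) ≤ 1/2) (by norm_num)
    simp only [smul_eq_mul] at key
    have hmid : (1/2 : ℝ) * (j:ℝ) + (1/2 : ℝ) * ((j:ℝ) + 2) = (j:ℝ) + 1 := by ring
    rw [hmid] at key
    rw [hb j, hb (j + 1)]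
    push_cast
    have e : ((j:ℝ) + 1 + 1) = (j:ℝ) + 2 := by ring
    rw [e]
    linarith
  · intro p
    have hcv := gconv hγ0 hγ1
    have key := hcv.2 (Set.mem_Ici.mpr (Nat.cast_nonneg p))
      (Set.mem_Ici.mpr (by positivity : (0:ℝ) ≤ (p:ℝ) + 2))
      (by norm_num : (0:ℝ) ≤ 1/2) (by norm_num : (0:ℝ) ≤ 1/2) (by norm_num)
    simp only [smul_eq_mul] at key
    have hmid : (1/2 : ℝ) * (p:ℝ) + (1/2 : ℝ) * ((p:ℝ) + 2) = (p:ℝ) + 1 := by ring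
    rw [hmid] at key
    rw [hb p, hb (p + 1), hb (p + 2)]
    push_cast
    have e1 : ((p:ℝ) + 1 + 1) = (p:ℝ) + 2 := by ring
    have e2 : ((p:ℝ) + 2 + 1) = (p:ℝ) + 3 := by ring
    rw [e1, e2]
    rw [e1, e2] at key
    linarith
open scoped RealInnerProductSpace

lemma fejer {H : Type*} [NormedAddCommGroup H] [InnerProductSpace ℝ H]
    (x : ℕ → H) (N n : ℕ) :
    0 ≤ ∑ j ∈ range N, ∑ k ∈ range N,
        ((n + 1 - (max j k - min j k) : ℕ) : ℝ) * ⟪x j, x k⟫ := by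
  set χ : ℕ → ℕ → ℝ := fun j t => if j ≤ t ∧ t ≤ j + n then 1 else 0 with hχ
  have key : ∀ j ∈ range N, ∀ k ∈ range N,
      ((n + 1 - (max j k - min j k) : ℕ) : ℝ) = ∑ t ∈ range (N + n), χ j t * χ k t := by
    intro j hj k hk
    rw [mem_range] at hj hk
    have h1 : ∀ t, χ j t * χ k t = if max j k ≤ t ∧ t ≤ min j k + n then (1:ℝ) else 0 := by
      intro t
      simp only [show (max j k ≤ t ∧ t ≤ min j k + n) ↔
        ((j ≤ t ∧ t ≤ j + n) ∧ (k ≤ t ∧ t ≤ k + n)) from by omega]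
      by_cases A : j ≤ t ∧ t ≤ j + n <;> by_cases B : k ≤ t ∧ t ≤ k + n <;>
        simp [hχ, A, B]
    rw [Finset.sum_congr rfl (fun t _ => h1 t), Finset.sum_boole]
    have h2 : (range (N + n)).filter (fun t => max j k ≤ t ∧ t ≤ min j k + n)
        = Finset.Icc (max j k) (min j k + n) := by
      ext t
      simp only [mem_filter, mem_range, Finset.mem_Icc]
      omega
    rw [h2, Nat.card_Icc]
    congr 1
    omega
  calc ∑ j ∈ range N, ∑ k ∈ range N, ((n + 1 - (max j k - min j k) : ℕ) : ℝ) * ⟪x j, x k⟫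
      = ∑ j ∈ range N, ∑ k ∈ range N, ∑ t ∈ range (N + n),
          (χ j t * χ k t) * ⟪x j, x k⟫ := by
        refine Finset.sum_congr rfl fun j hj => Finset.sum_congr rfl fun k hk => ?_
        rw [key j hj k hk, Finset.sum_mul]
    _ = ∑ t ∈ range (N + n), ∑ j ∈ range N, ∑ k ∈ range N,
          (χ j t * χ k t) * ⟪x j, x k⟫ := by
        rw [Finset.sum_congr rfl fun j _ => Finset.sum_comm, Finset.sum_comm]
    _ = ∑ t ∈ range (N + n), ⟪∑ j ∈ range N, χ j t • x j, ∑ k ∈ range N, χ k t • x k⟫ := by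
        refine Finset.sum_congr rfl fun t _ => ?_
        rw [sum_inner]
        refine Finset.sum_congr rfl fun j _ => ?_
        rw [inner_sum]
        refine Finset.sum_congr rfl fun k _ => ?_
        rw [real_inner_smul_left, real_inner_smul_right]
        ring
    _ ≥ 0 := Finset.sum_nonneg fun t _ => real_inner_self_nonneg

-- telescoping for d
lemma dtel (c : ℕ → ℝ) {m M : ℕ} (hm : m ≤ M) :
    (c m - c (m + 1)) - (c M - c (M + 1))
      = ∑ p ∈ Finset.Ico m M, (c p - 2 * c (p + 1) + c (p + 2)) := by
  have h : ∀ p, c p - 2 * c (p + 1) + c (p + 2)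
      = (c p - c (p + 1)) - (c (p + 1) - c (p + 1 + 1)) := by intro p; ring
  rw [Finset.sum_congr rfl fun p _ => h p]
  rw [Finset.sum_Ico_eq_sub _ hm]
  rw [Finset.sum_range_sub' (fun q => c q - c (q + 1)),
    Finset.sum_range_sub' (fun q => c q - c (q + 1))]
  ring

-- kernel decomposition
lemma kerdec (c : ℕ → ℝ) (N : ℕ) (hN : 1 ≤ N) : ∀ m ≤ N,
    c m = c N + ((N - m : ℕ) : ℝ) * (c (N - 1) - c N)
      + ∑ p ∈ range (N - 1), (c p - 2 * c (p + 1) + c (p + 2)) * ((p + 1 - m : ℕ) : ℝ) := by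
  suffices h : ∀ i : ℕ, ∀ m ≤ N, N - m = i → c m = c N + ((N - m : ℕ) : ℝ) * (c (N - 1) - c N)
      + ∑ p ∈ range (N - 1), (c p - 2 * c (p + 1) + c (p + 2)) * ((p + 1 - m : ℕ) : ℝ) by
    intro m hm; exact h (N - m) m hm rfl
  intro i
  induction i with
  | zero =>
    intro m hm h0
    have hmeq : m = N := by omega
    rw [hmeq]
    have hz : ∀ p ∈ range (N - 1), (c p - 2 * c (p + 1) + c (p + 2)) * ((p + 1 - N : ℕ) : ℝ) = 0 := by
      intro p hp
      rw [mem_range] at hp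
      have : p + 1 - N = 0 := by omega
      rw [this]; simp
    rw [Finset.sum_eq_zero hz]
    simp [Nat.sub_self]
  | succ i ih =>
    intro m hm hi
    have hmN : m < N := by omega
    have ihm : c (m + 1) = c N + ((N - (m + 1) : ℕ) : ℝ) * (c (N - 1) - c N)
        + ∑ p ∈ range (N - 1), (c p - 2 * c (p + 1) + c (p + 2)) * ((p + 1 - (m + 1) : ℕ) : ℝ) :=
      ih (m + 1) (by omega) (by omega)
    -- d m = d (N-1) + ∑_{p ∈ Ico m (N-1)} Δ² p
    have htel := dtel c (show m ≤ N - 1 by omega)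
    rw [show N - 1 + 1 = N by omega] at htel
    -- split the main sum difference
    have hsplit : ∑ p ∈ range (N - 1), (c p - 2 * c (p + 1) + c (p + 2)) * ((p + 1 - m : ℕ) : ℝ)
        = (∑ p ∈ range (N - 1), (c p - 2 * c (p + 1) + c (p + 2)) * ((p + 1 - (m + 1) : ℕ) : ℝ))
          + ∑ p ∈ Finset.Ico m (N - 1), (c p - 2 * c (p + 1) + c (p + 2)) := by
      have h1 : ∀ p ∈ range (N - 1), (c p - 2 * c (p + 1) + c (p + 2)) * ((p + 1 - m : ℕ) : ℝ)
          = (c p - 2 * c (p + 1) + c (p + 2)) * ((p + 1 - (m + 1) : ℕ) : ℝ)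
            + (if m ≤ p then (c p - 2 * c (p + 1) + c (p + 2)) else 0) := by
        intro p _
        by_cases hmp : m ≤ p
        · have e1 : ((p + 1 - m : ℕ) : ℝ) = ((p + 1 - (m + 1) : ℕ) : ℝ) + 1 := by
            have : p + 1 - m = (p + 1 - (m + 1)) + 1 := by omega
            rw [this]; push_cast; ring
          rw [e1]; simp [hmp]; ring
        · have e1 : p + 1 - m = 0 := by omega
          have e2 : p + 1 - (m + 1) = 0 := by omega
          rw [e1, e2]; simp [hmp]
      rw [Finset.sum_congr rfl h1, Finset.sum_add_distrib]
      congr 1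
      rw [Finset.sum_ite, Finset.sum_const_zero, add_zero]
      apply Finset.sum_congr _ (fun _ _ => rfl)
      ext p
      simp only [mem_filter, mem_range, Finset.mem_Ico]
      omega
    have hcast : ((N - m : ℕ) : ℝ) = ((N - (m + 1) : ℕ) : ℝ) + 1 := by
      have : N - m = (N - (m + 1)) + 1 := by omega
      rw [this]; push_cast; ring
    rw [hsplit, hcast]
    have hc : c m = c (m + 1) + ((c m - c (m + 1)) - (c (N - 1) - c N)) + (c (N - 1) - c N) := by ring
    rw [hc, htel, ihm]
    ring

open scoped RealInnerProductSpace
open Finset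

/-- Unconditional stability of the implicit Euler L1 scheme:
`‖u^N‖_a² ≤ ‖u⁰‖_a² + α₀ Σ_{k=0}^{N-1} ‖f^{k+1}‖²`. -/
theorem stmt8 {H : Type*} [NormedAddCommGroup H] [InnerProductSpace ℝ H]
    [FiniteDimensional ℝ H]
    (a : H →ₗ[ℝ] H →ₗ[ℝ] ℝ)
    (hsymm : ∀ u v : H, a u v = a v u)
    (hpos : ∀ w : H, 0 ≤ a w w)
    (α : ℝ) (hα0 : 0 < α) (hα1 : α < 1)
    (b : ℕ → ℝ) (hb : ∀ j : ℕ, b j = ((j : ℝ) + 1) ^ (1 - α) - (j : ℝ) ^ (1 - α))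
    (α₀ : ℝ) (hα₀ : 0 < α₀)
    (N : ℕ) (f u : ℕ → H)
    (hscheme : ∀ k < N, ∀ v : H,
      (∑ j ∈ Finset.range (k + 1), b (k - j) * ⟪u (j + 1) - u j, v⟫)
        + α₀ * a (u (k + 1)) v = α₀ * ⟪f (k + 1), v⟫) :
    a (u N) (u N) ≤ a (u 0) (u 0) + α₀ * ∑ k ∈ Finset.range N, ‖f (k + 1)‖ ^ 2 := by
  rcases Nat.eq_zero_or_pos N with hN | hN
  · subst hN; simp
  obtain ⟨hb0, hbnn, hbdec, hbconv⟩ := bfacts hα0 hα1 b hb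
  obtain ⟨x, hxdef⟩ : ∃ x : ℕ → H, ∀ k, x k = u (k + 1) - u k := ⟨_, fun _ => rfl⟩
  -- abbreviations
  set T : ℝ := ∑ k ∈ range N, ∑ j ∈ range (k + 1), b (k - j) * ⟪x j, x k⟫ with hT
  set S : ℝ := ∑ j ∈ range N, ∑ k ∈ range N, b (max j k - min j k) * ⟪x j, x k⟫ with hS
  -- Step 1 : summed scheme
  have hsum : T + α₀ * ∑ k ∈ range N, a (u (k + 1)) (x k)
      = α₀ * ∑ k ∈ range N, ⟪f (k + 1), x k⟫ := by
    have h : ∀ k ∈ range N,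
        (∑ j ∈ range (k + 1), b (k - j) * ⟪x j, x k⟫) + α₀ * a (u (k + 1)) (x k)
          = α₀ * ⟪f (k + 1), x k⟫ := by
      intro k hk
      have := hscheme k (mem_range.mp hk) (x k)
      simpa only [← hxdef] using this
    calc T + α₀ * ∑ k ∈ range N, a (u (k + 1)) (x k)
        = ∑ k ∈ range N, ((∑ j ∈ range (k + 1), b (k - j) * ⟪x j, x k⟫)
            + α₀ * a (u (k + 1)) (x k)) := by
          rw [Finset.sum_add_distrib, ← Finset.mul_sum, hT]
      _ = ∑ k ∈ range N, α₀ * ⟪f (k + 1), x k⟫ := Finset.sum_congr rfl h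
      _ = α₀ * ∑ k ∈ range N, ⟪f (k + 1), x k⟫ := (Finset.mul_sum _ _ _).symm
  -- Step 2 : positivity of the symmetric kernel sum
  have hG : ∀ n : ℕ, 0 ≤ ∑ j ∈ range N, ∑ k ∈ range N,
      ((n + 1 - (max j k - min j k) : ℕ) : ℝ) * ⟪x j, x k⟫ := fun n => fejer x N n
  have hI : (0:ℝ) ≤ ∑ j ∈ range N, ∑ k ∈ range N, ⟪x j, x k⟫ := by
    have : ∑ j ∈ range N, ∑ k ∈ range N, ⟪x j, x k⟫
        = ⟪∑ j ∈ range N, x j, ∑ k ∈ range N, x k⟫ := by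
      rw [sum_inner]
      exact Finset.sum_congr rfl fun j _ => (inner_sum _ _ _).symm
    rw [this]
    exact real_inner_self_nonneg
  have hSpos : 0 ≤ S := by
    have hkd : ∀ j ∈ range N, ∀ k ∈ range N,
        b (max j k - min j k) * ⟪x j, x k⟫
          = b N * ⟪x j, x k⟫
            + (b (N - 1) - b N) * (((N - 1) + 1 - (max j k - min j k) : ℕ) : ℝ) * ⟪x j, x k⟫
            + (∑ p ∈ range (N - 1),
                (b p - 2 * b (p + 1) + b (p + 2)) * ((p + 1 - (max j k - min j k) : ℕ) : ℝ))
              * ⟪x j, x k⟫ := by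
      intro j hj k hk
      rw [mem_range] at hj hk
      have hm : max j k - min j k ≤ N := by omega
      have hkd0 := kerdec b N hN _ hm
      have hcast : ((N - (max j k - min j k) : ℕ) : ℝ)
          = (((N - 1) + 1 - (max j k - min j k) : ℕ) : ℝ) := by congr 1; omega
      rw [hkd0, hcast]
      ring
    have hsplit : S
        = b N * (∑ j ∈ range N, ∑ k ∈ range N, ⟪x j, x k⟫)
          + (b (N - 1) - b N) * (∑ j ∈ range N, ∑ k ∈ range N,
              (((N - 1) + 1 - (max j k - min j k) : ℕ) : ℝ) * ⟪x j, x k⟫)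
          + ∑ p ∈ range (N - 1), (b p - 2 * b (p + 1) + b (p + 2))
              * (∑ j ∈ range N, ∑ k ∈ range N,
                  ((p + 1 - (max j k - min j k) : ℕ) : ℝ) * ⟪x j, x k⟫) := by
      rw [hS, Finset.sum_congr rfl fun j hj => Finset.sum_congr rfl fun k hk => hkd j hj k hk]
      simp only [Finset.sum_add_distrib]
      congr 1
      · congr 1
        · rw [Finset.mul_sum]
          exact Finset.sum_congr rfl fun j _ => by rw [Finset.mul_sum]
        · rw [Finset.mul_sum]
          refine Finset.sum_congr rfl fun j _ => ?_
          rw [Finset.mul_sum]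
          exact Finset.sum_congr rfl fun k _ => by ring
      · rw [Finset.sum_congr rfl fun j (_ : j ∈ range N) =>
          Finset.sum_congr rfl fun k (_ : k ∈ range N) => Finset.sum_mul _ _ _]
        rw [Finset.sum_congr rfl fun j (_ : j ∈ range N) => Finset.sum_comm]
        rw [Finset.sum_comm]
        refine Finset.sum_congr rfl fun p _ => ?_
        rw [Finset.mul_sum]
        refine Finset.sum_congr rfl fun j _ => ?_
        rw [Finset.mul_sum]
        exact Finset.sum_congr rfl fun k _ => by ring
    rw [hsplit]
    have hbN1 : b N ≤ b (N - 1) := by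
      have := hbdec (N - 1)
      rwa [show N - 1 + 1 = N from by omega] at this
    have h3 : (0:ℝ) ≤ ∑ p ∈ range (N - 1), (b p - 2 * b (p + 1) + b (p + 2))
        * (∑ j ∈ range N, ∑ k ∈ range N,
            ((p + 1 - (max j k - min j k) : ℕ) : ℝ) * ⟪x j, x k⟫) :=
      Finset.sum_nonneg fun p _ => mul_nonneg (hbconv p) (hG p)
    have h2 := mul_nonneg (sub_nonneg.mpr hbN1) (hG (N - 1))
    have h1 := mul_nonneg (hbnn N) hI
    linarith
  -- Step 3 : lower bound for T
  have hTlow : (1/2 : ℝ) * ∑ k ∈ range N, ‖x k‖ ^ 2 ≤ T := by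
    have hgsym : ∀ j k : ℕ, b (max j k - min j k) * ⟪x j, x k⟫
        = b (max k j - min k j) * ⟪x k, x j⟫ := by
      intro j k
      rw [max_comm, min_comm, real_inner_comm]
    have htri := tri (fun j k => b (max j k - min j k) * ⟪x j, x k⟫) hgsym N
    have hTT : ∑ k ∈ range N, ∑ j ∈ range (k + 1), b (max j k - min j k) * ⟪x j, x k⟫ = T := by
      rw [hT]
      refine Finset.sum_congr rfl fun k _ => Finset.sum_congr rfl fun j hj => ?_
      rw [mem_range] at hj
      have hjk : j ≤ k := by omega
      rw [max_eq_right hjk, min_eq_left hjk]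
    have hD : ∑ k ∈ range N, b (max k k - min k k) * ⟪x k, x k⟫
        = ∑ k ∈ range N, ‖x k‖ ^ 2 := by
      refine Finset.sum_congr rfl fun k _ => ?_
      rw [max_self, min_self, Nat.sub_self, hb0, one_mul, real_inner_self_eq_norm_sq]
    rw [hTT] at htri
    rw [hD] at htri
    rw [← hS] at htri
    linarith [hSpos]
  -- Step 4 : energy lower bound
  have hE : (a (u N) (u N) - a (u 0) (u 0)) / 2 ≤ ∑ k ∈ range N, a (u (k + 1)) (x k) := by
    have h1 : ∀ k ∈ range N,
        (a (u (k + 1)) (u (k + 1)) - a (u k) (u k)) / 2 ≤ a (u (k + 1)) (x k) := by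
      intro k _
      have hpx := hpos (x k)
      have hxx : a (x k) (x k)
          = a (u (k + 1)) (u (k + 1)) - 2 * a (u (k + 1)) (u k) + a (u k) (u k) := by
        rw [hxdef]
        simp only [map_sub, LinearMap.sub_apply]
        rw [hsymm (u k) (u (k + 1))]
        ring
      have hax : a (u (k + 1)) (x k)
          = a (u (k + 1)) (u (k + 1)) - a (u (k + 1)) (u k) := by
        rw [hxdef]
        simp only [map_sub, LinearMap.sub_apply]
      linarith
    calc (a (u N) (u N) - a (u 0) (u 0)) / 2
        = ∑ k ∈ range N, (a (u (k + 1)) (u (k + 1)) - a (u k) (u k)) / 2 := by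
          rw [← Finset.sum_div, Finset.sum_range_sub (fun k => a (u k) (u k))]
      _ ≤ _ := Finset.sum_le_sum h1
  -- Step 5 : RHS upper bound
  have hR : α₀ * ∑ k ∈ range N, ⟪f (k + 1), x k⟫
      ≤ α₀ ^ 2 / 2 * ∑ k ∈ range N, ‖f (k + 1)‖ ^ 2
        + (1/2 : ℝ) * ∑ k ∈ range N, ‖x k‖ ^ 2 := by
    rw [Finset.mul_sum, Finset.mul_sum, Finset.mul_sum, ← Finset.sum_add_distrib]
    refine Finset.sum_le_sum fun k _ => ?_
    have hcs := real_inner_le_norm (f (k + 1)) (x k)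
    have hsc := mul_le_mul_of_nonneg_left hcs hα₀.le
    nlinarith [sq_nonneg (α₀ * ‖f (k + 1)‖ - ‖x k‖)]
  -- conclusion
  have hmul := mul_le_mul_of_nonneg_left hE hα₀.le
  have e1 : α₀ ^ 2 / 2 * ∑ k ∈ range N, ‖f (k + 1)‖ ^ 2
      = α₀ * (α₀ / 2 * ∑ k ∈ range N, ‖f (k + 1)‖ ^ 2) := by ring
  have e2 : α₀ * ((a (u N) (u N) - a (u 0) (u 0)) / 2)
      ≤ α₀ * (α₀ / 2 * ∑ k ∈ range N, ‖f (k + 1)‖ ^ 2) := by linarith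
  have e3 := le_of_mul_le_mul_left e2 hα₀
  have e4 : α₀ * ∑ k ∈ range N, ‖f (k + 1)‖ ^ 2
      = 2 * (α₀ / 2 * ∑ k ∈ range N, ‖f (k + 1)‖ ^ 2) := by ring
  linarith
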